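/- For 2/3 < α < 1, the distance functional Δ_{αℤ,ℝ} := inf over nonzero finitely-supported integer sequences n of ‖P_{1-α} n‖_{ℓ²(ℤ)} equals 0, where P_{1-α} is the orthogonal projection on ℓ²(ℤ) acting on the Fourier side as multiplication by the 1-periodic indicator of (-(1-α)/2, (1-α)/2). -/

import Mathlib

open Real

/-- Normalized cardinal sine. -/
noncomputable def sinc (x : ℝ) : ℝ :=
  if x = 0 then 1 else Real.sin (Real.pi * x) / (Real.pi * x)

open MeasureTheory Finset
lemma sinc_neg (x : ℝ) : _root_.sinc (-x) = _root_.sinc x := by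
  unfold _root_.sinc
  rcases eq_or_ne x 0 with h | h
  · simp [h]
  · rw [if_neg (neg_ne_zero.mpr h), if_neg h, mul_neg, Real.sin_neg, neg_div_neg_eq]

lemma norm_one_sub_exp (θ : ℝ) :
    ‖1 - Complex.exp (θ * Complex.I)‖ = 2 * |Real.sin (θ / 2)| := by
  have h : 1 - Complex.exp (θ * Complex.I)
      = (-2 * Real.sin (θ / 2)) * Complex.I * Complex.exp ((θ / 2 : ℝ) * Complex.I) := by
    rw [Complex.exp_mul_I, Complex.exp_mul_I]
    have h1 : (θ : ℂ) = 2 * ((θ / 2 : ℝ) : ℂ) := by push_cast; ring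
    rw [h1, Complex.cos_two_mul, Complex.sin_two_mul]
    rw [← Complex.ofReal_sin]
    have h2 := Complex.sin_sq_add_cos_sq ((θ / 2 : ℝ) : ℂ)
    have h3 := Complex.I_sq
    rw [← Complex.ofReal_sin] at h2
    linear_combination (-2 : ℂ) * h2 + 2 * ((Real.sin (θ / 2) : ℂ))^2 * h3
  rw [h]
  simp only [norm_mul, Complex.norm_exp_ofReal_mul_I, Complex.norm_I]
  simp only [map_mul, Complex.norm_I, Complex.norm_real, norm_neg, Complex.norm_two,
    Complex.norm_exp_ofReal_mul_I, mul_one, Real.norm_eq_abs]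

lemma integral_exp_window (β : ℝ) (hβ : 0 < β) (m : ℤ) :
    ∫ t in (-(β/2))..(β/2), Complex.exp ((2 * π * Complex.I * m) * t)
      = ((β * _root_.sinc (β * m) : ℝ) : ℂ) := by
  rcases eq_or_ne m 0 with hm | hm
  · simp [hm, _root_.sinc]
  · have hm' : (m : ℂ) ≠ 0 := Int.cast_ne_zero.mpr hm
    have hπ : (π : ℂ) ≠ 0 := Complex.ofReal_ne_zero.mpr Real.pi_ne_zero
    have hc : (2 * π * Complex.I * m : ℂ) ≠ 0 := by
      simp [Complex.I_ne_zero, hm', hπ]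
    rw [integral_exp_mul_complex hc]
    have e1 : (2 * π * Complex.I * m : ℂ) * ((β/2 : ℝ) : ℂ) = ((π * β * m : ℝ) : ℂ) * Complex.I := by
      push_cast; ring
    have e2 : (2 * π * Complex.I * m : ℂ) * ((-(β/2) : ℝ) : ℂ)
        = (-(π * β * m : ℝ) : ℂ) * Complex.I := by push_cast; ring
    rw [e1, e2]
    rw [show (-(π * β * m : ℝ) : ℂ) * Complex.I = ((-(π * β * m) : ℝ) : ℂ) * Complex.I by push_cast; ring]
    rw [Complex.exp_mul_I, Complex.exp_mul_I]
    rw [← Complex.ofReal_sin, ← Complex.ofReal_cos, ← Complex.ofReal_sin, ← Complex.ofReal_cos]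
    rw [Real.sin_neg, Real.cos_neg]
    have hβm : β * m ≠ 0 := by
      exact mul_ne_zero (ne_of_gt hβ) (by exact_mod_cast hm)
    rw [_root_.sinc, if_neg hβm]
    have hπm : (π : ℝ) * m ≠ 0 := mul_ne_zero Real.pi_ne_zero (by exact_mod_cast hm)
    field_simp
    have hd : ((π : ℂ) * ((β : ℂ) * (m : ℂ))) ≠ 0 := by
      push_cast
      exact mul_ne_zero hπ (by exact_mod_cast hβm)
    push_cast
    field_simp
    have := Complex.I_sq
    ring
noncomputable def nn (N : ℕ) : ℤ →₀ ℤ :=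
  ∑ k ∈ Finset.range (N+1), Finsupp.single (k : ℤ) ((-1)^k * (N.choose k))

lemma nn_apply_coe (N k : ℕ) (hk : k ∈ Finset.range (N+1)) :
    nn N (k : ℤ) = (-1)^k * (N.choose k) := by
  rw [nn, Finsupp.finset_sum_apply]
  rw [Finset.sum_eq_single k]
  · exact Finsupp.single_eq_same
  · intro b _ hb
    rw [Finsupp.single_apply, if_neg (by exact_mod_cast hb)]
  · intro h; exact absurd hk h

lemma nn_apply_ne (N : ℕ) (m : ℤ) (hm : ∀ k ∈ Finset.range (N+1), (k : ℤ) ≠ m) :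
    nn N m = 0 := by
  rw [nn, Finsupp.finset_sum_apply]
  apply Finset.sum_eq_zero
  intro k hk
  rw [Finsupp.single_apply, if_neg (hm k hk)]

lemma nn_ne_zero (N : ℕ) : nn N ≠ 0 := by
  intro h
  have h0 : nn N ((0:ℕ) : ℤ) = 1 := by
    rw [nn_apply_coe N 0 (by simp)]; simp
  rw [h] at h0
  simp at h0

lemma sum_nn_exp (N : ℕ) (t : ℝ) :
    ∑ k ∈ Finset.range (N+1),
        ((nn N (k : ℤ) : ℂ)) * Complex.exp ((2 * π * Complex.I * k) * t)
      = (1 - Complex.exp ((2 * π * Complex.I) * t))^N := by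
  have : (1 - Complex.exp ((2 * π * Complex.I) * t))^N
      = (-Complex.exp ((2 * π * Complex.I) * t) + 1)^N := by ring_nf
  rw [this, add_pow]
  apply Finset.sum_congr rfl
  intro k hk
  rw [nn_apply_coe N k hk]
  rw [show ((2 * π * Complex.I * k) * t) = (k : ℕ) * ((2 * π * Complex.I) * t) by push_cast; ring]
  rw [Complex.exp_nat_mul]
  push_cast
  ring
section Main
open AddCircle Complex

variable (β : ℝ) (N : ℕ)

/-- The trig polynomial `(1 - e^{2πit})^N`. -/
noncomputable def Cf (N : ℕ) : ℝ → ℂ := fun t => (1 - Complex.exp ((2 * π * Complex.I) * t))^N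

noncomputable def Ff (β : ℝ) (N : ℕ) : ℝ → ℂ :=
  Set.indicator (Set.Ioc (-(β/2)) (β/2)) (Cf N)

lemma Cf_cont (N : ℕ) : Continuous (Cf N) := by
  unfold Cf; fun_prop

lemma Cf_norm (N : ℕ) (t : ℝ) : ‖Cf N t‖ = (2 * |Real.sin (π * t)|)^N := by
  unfold Cf
  rw [norm_pow]
  congr 1
  rw [show ((2 * π * Complex.I) * (t:ℂ)) = ((2 * π * t : ℝ) : ℂ) * Complex.I by push_cast; ring]
  rw [norm_one_sub_exp]
  norm_num
  congr 2
  ring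

lemma Ff_norm_le (β : ℝ) (N : ℕ) (y : ℝ) : ‖Ff β N y‖ ≤ 2^N := by
  unfold Ff
  rw [Set.indicator_apply]
  split
  · rw [Cf_norm]
    apply pow_le_pow_left₀ (by positivity)
    have := Real.abs_sin_le_one (π * y)
    linarith
  · simp only [norm_zero]
    positivity

end Main
theorem fact_zero_lt_one_real : Fact ((0:ℝ) < 1) := ⟨one_pos⟩

section Main2
open AddCircle Complex

attribute [local instance] fact_zero_lt_one_real

noncomputable def f0 (β : ℝ) (N : ℕ) : AddCircle (1:ℝ) → ℂ :=
  AddCircle.liftIoc 1 (-(1/2)) (Ff β N)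

lemma Ff_measurable (β : ℝ) (N : ℕ) : Measurable (Ff β N) :=
  ((Cf_cont N).measurable).indicator measurableSet_Ioc

lemma f0_measurable (β : ℝ) (N : ℕ) : Measurable (f0 β N) := by
  have h1 : Measurable (⇑(AddCircle.measurableEquivIoc (1:ℝ) (-(1/2)))) :=
    (AddCircle.measurableEquivIoc (1:ℝ) (-(1/2))).measurable
  exact ((Ff_measurable β N).comp measurable_subtype_coe).comp h1

lemma f0_memLp (β : ℝ) (N : ℕ) : MemLp (f0 β N) 2 (@haarAddCircle 1 _) := by
  apply MemLp.of_bound (f0_measurable β N).aestronglyMeasurable ((2:ℝ)^N)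
  filter_upwards with x
  exact Ff_norm_le β N _

end Main2
section Main3
open AddCircle Complex

attribute [local instance] fact_zero_lt_one_real

noncomputable def Aj (β : ℝ) (N : ℕ) (j : ℤ) : ℝ :=
  ∑ k ∈ Finset.range (N+1), (nn N (k:ℤ) : ℝ) * (β * _root_.sinc (β * ((k:ℝ) - (j:ℝ))))

lemma fourierCoeff_f0 (β : ℝ) (hβ0 : 0 < β) (hβ : β < 1/3) (N : ℕ) (j : ℤ) :
    fourierCoeff (f0 β N) j = ((Aj β N j : ℝ) : ℂ) := by
  rw [fourierCoeff_eq_intervalIntegral (f0 β N) j (-(1/2))]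
  rw [show (-(1/2:ℝ) + 1) = 1/2 by norm_num, show (1/(1:ℝ)) = 1 by norm_num, one_smul]
  have le1 : (-(1/2):ℝ) ≤ 1/2 := by norm_num
  have le2 : (-(β/2)) ≤ β/2 := by linarith
  have h1 : (∫ x in (-(1/2))..(1/2), fourier (-j) (x : AddCircle (1:ℝ)) • f0 β N (x : AddCircle (1:ℝ)))
      = ∫ x in (-(1/2))..(1/2), fourier (-j) (x : AddCircle (1:ℝ)) • Ff β N x := by
    rw [intervalIntegral.integral_of_le le1, intervalIntegral.integral_of_le le1]
    apply setIntegral_congr_fun measurableSet_Ioc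
    intro x hx
    have hx' : x ∈ Set.Ioc (-(1/2):ℝ) (-(1/2) + 1) := by
      rw [show (-(1/2:ℝ) + 1) = 1/2 by norm_num]; exact hx
    simp only [f0]
    rw [AddCircle.liftIoc_coe_apply hx']
  have h2 : (∫ x in (-(1/2))..(1/2), fourier (-j) (x : AddCircle (1:ℝ)) • Ff β N x)
      = ∫ x in (-(β/2))..(β/2), fourier (-j) (x : AddCircle (1:ℝ)) • Cf N x := by
    have hsub : Set.Ioc (-(β/2)) (β/2) ⊆ Set.Ioc (-(1/2):ℝ) (1/2) :=
      Set.Ioc_subset_Ioc (by linarith) (by linarith)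
    rw [intervalIntegral.integral_of_le le1, intervalIntegral.integral_of_le le2]
    have hpt : ∀ x : ℝ, fourier (-j) (x : AddCircle (1:ℝ)) • Ff β N x
        = Set.indicator (Set.Ioc (-(β/2)) (β/2))
            (fun t => fourier (-j) (t : AddCircle (1:ℝ)) • Cf N t) x := by
      intro x
      unfold Ff
      rw [Set.indicator_apply, Set.indicator_apply]
      split <;> simp
    simp_rw [hpt]
    rw [setIntegral_indicator measurableSet_Ioc, Set.inter_eq_self_of_subset_right hsub]
  have h3 : (∫ x in (-(β/2))..(β/2), fourier (-j) (x : AddCircle (1:ℝ)) • Cf N x)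
      = ∑ k ∈ Finset.range (N+1), (nn N (k:ℤ) : ℂ)
          * ((β * _root_.sinc (β * ((k:ℝ) - (j:ℝ))) : ℝ) : ℂ) := by
    have hpt : ∀ x : ℝ, fourier (-j) (x : AddCircle (1:ℝ)) • Cf N x
        = ∑ k ∈ Finset.range (N+1), (nn N (k:ℤ) : ℂ)
            * Complex.exp ((2 * π * Complex.I * (((k : ℤ) - j : ℤ) : ℂ)) * x) := by
      intro x
      rw [show Cf N x = ∑ k ∈ Finset.range (N+1),
          ((nn N (k : ℤ) : ℂ)) * Complex.exp ((2 * π * Complex.I * k) * x) from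
        (sum_nn_exp N x).symm]
      rw [smul_eq_mul, Finset.mul_sum]
      apply Finset.sum_congr rfl
      intro k hk
      rw [fourier_coe_apply, ← mul_assoc, mul_comm _ ((nn N (k:ℤ) : ℂ)), mul_assoc,
        ← Complex.exp_add]
      congr 1
      push_cast
      field_simp
      ring
    simp_rw [hpt]
    rw [intervalIntegral.integral_finset_sum]
    · apply Finset.sum_congr rfl
      intro k hk
      rw [intervalIntegral.integral_const_mul, integral_exp_window β hβ0 ((k : ℤ) - j)]
      congr 2
      push_cast
      ring
    · intro k hk
      apply Continuous.intervalIntegrable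
      fun_prop
  rw [h1, h2, h3]
  rw [Aj]
  push_cast
  simp

end Main3
section Main4
open AddCircle Complex

attribute [local instance] fact_zero_lt_one_real

lemma sin_abs_le (β x : ℝ) (hβ0 : 0 < β) (hβ : β < 1/3) (hx : |x| ≤ β/2) :
    |Real.sin (π * x)| ≤ Real.sin (π * β / 2) := by
  have hπ := Real.pi_pos
  have h1 : |Real.sin (π * x)| = |Real.sin (π * |x|)| := by
    rcases le_or_gt 0 x with h | h
    · rw [_root_.abs_of_nonneg h]
    · rw [_root_.abs_of_neg h, mul_neg, Real.sin_neg, abs_neg]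
  have hx0 : 0 ≤ |x| := abs_nonneg x
  have h2 : |Real.sin (π * |x|)| = Real.sin (π * |x|) := by
    apply _root_.abs_of_nonneg
    apply Real.sin_nonneg_of_nonneg_of_le_pi (by positivity)
    nlinarith
  rw [h1, h2]
  rcases lt_or_eq_of_le hx with h | h
  · apply le_of_lt
    apply Real.sin_lt_sin_of_lt_of_le_pi_div_two (by nlinarith [mul_nonneg (le_of_lt hπ) hx0]) (by nlinarith)
    nlinarith
  · rw [h]; rw [show π * (β/2) = π * β / 2 by ring]

lemma Cf_sq_le (β x : ℝ) (N : ℕ) (hβ0 : 0 < β) (hβ : β < 1/3)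
    (hx : x ∈ Set.Ioc (-(β/2)) (β/2)) :
    ‖Cf N x‖^2 ≤ (2 * Real.sin (π * β / 2))^(2*N) := by
  have habs : |x| ≤ β/2 := abs_le.mpr ⟨le_of_lt hx.1, hx.2⟩
  have h1 : ‖Cf N x‖ ≤ (2 * Real.sin (π * β / 2))^N := by
    rw [Cf_norm]
    apply pow_le_pow_left₀ (by positivity)
    have := sin_abs_le β x hβ0 hβ habs
    linarith
  calc ‖Cf N x‖^2 ≤ ((2 * Real.sin (π * β / 2))^N)^2 := by
        apply pow_le_pow_left₀ (norm_nonneg _) h1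
    _ = (2 * Real.sin (π * β / 2))^(2*N) := by rw [← pow_mul, mul_comm N 2]

lemma integral_f0_le (β : ℝ) (hβ0 : 0 < β) (hβ : β < 1/3) (N : ℕ) :
    (∫ t : AddCircle (1:ℝ), ‖f0 β N t‖^2 ∂(@haarAddCircle 1 _))
      ≤ β * (2 * Real.sin (π * β / 2))^(2*N) := by
  have hq0 : (0:ℝ) ≤ 2 * Real.sin (π * β / 2) := by
    have : 0 ≤ Real.sin (π * β / 2) := by
      apply Real.sin_nonneg_of_nonneg_of_le_pi (by positivity)
      nlinarith [Real.pi_pos]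
    linarith
  have hmeas : (∫ t : AddCircle (1:ℝ), ‖f0 β N t‖^2 ∂(@haarAddCircle 1 _))
      = ∫ x in Set.Ioc (-(1/2):ℝ) (-(1/2) + 1), ‖f0 β N x‖^2 := by
    rw [AddCircle.integral_preimage 1 (-(1/2)) (fun z => ‖f0 β N z‖^2)]
    rw [AddCircle.volume_eq_smul_haarAddCircle, integral_smul_measure]
    simp
  rw [hmeas]
  have h1 : (∫ x in Set.Ioc (-(1/2):ℝ) (-(1/2) + 1), ‖f0 β N x‖^2)
      = ∫ x in Set.Ioc (-(1/2):ℝ) (-(1/2) + 1), ‖Ff β N x‖^2 := by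
    apply setIntegral_congr_fun measurableSet_Ioc
    intro x hx
    simp only [f0]
    rw [AddCircle.liftIoc_coe_apply hx]
  rw [h1]
  have h2 : (∫ x in Set.Ioc (-(1/2):ℝ) (-(1/2) + 1), ‖Ff β N x‖^2)
      = ∫ x in Set.Ioc (-(β/2)) (β/2), ‖Cf N x‖^2 := by
    have hsub : Set.Ioc (-(β/2)) (β/2) ⊆ Set.Ioc (-(1/2):ℝ) (-(1/2) + 1) :=
      Set.Ioc_subset_Ioc (by linarith) (by linarith)
    have hpt : ∀ x : ℝ, ‖Ff β N x‖^2
        = Set.indicator (Set.Ioc (-(β/2)) (β/2)) (fun t => ‖Cf N t‖^2) x := by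
      intro x
      unfold Ff
      rw [Set.indicator_apply, Set.indicator_apply]
      split <;> simp
    simp_rw [hpt]
    rw [setIntegral_indicator measurableSet_Ioc, Set.inter_eq_self_of_subset_right hsub]
  rw [h2]
  have hbound := norm_setIntegral_le_of_norm_le_const (μ := volume)
    (s := Set.Ioc (-(β/2)) (β/2)) (C := (2 * Real.sin (π * β / 2))^(2*N))
    (f := fun x => ‖Cf N x‖^2)
    (by exact measure_Ioc_lt_top)
    (fun x hx => by
      rw [Real.norm_eq_abs, _root_.abs_of_nonneg (by positivity)]
      exact Cf_sq_le β x N hβ0 hβ hx)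
  have hvol : volume.real (Set.Ioc (-(β/2)) (β/2)) = β := by
    rw [measureReal_def, Real.volume_Ioc]
    rw [ENNReal.toReal_ofReal (by linarith)]
    ring
  rw [hvol] at hbound
  calc (∫ x in Set.Ioc (-(β/2)) (β/2), ‖Cf N x‖^2)
      ≤ ‖∫ x in Set.Ioc (-(β/2)) (β/2), ‖Cf N x‖^2‖ := le_abs_self _
    _ ≤ (2 * Real.sin (π * β / 2))^(2*N) * β := hbound
    _ = β * (2 * Real.sin (π * β / 2))^(2*N) := by ring

end Main4
section Main5
open AddCircle Complex

attribute [local instance] fact_zero_lt_one_real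

lemma tsum_Aj_sq_le (β : ℝ) (hβ0 : 0 < β) (hβ : β < 1/3) (N : ℕ) :
    ∑' j : ℤ, (Aj β N j)^2 ≤ β * (2 * Real.sin (π * β / 2))^(2*N) := by
  set fL := (f0_memLp β N).toLp (f0 β N) with hfL
  have hP := tsum_sq_fourierCoeff fL
  have hcoeff : ∀ i : ℤ, fourierCoeff (fL : AddCircle (1:ℝ) → ℂ) i
      = fourierCoeff (f0 β N) i := by
    intro i
    simp only [fourierCoeff]
    apply integral_congr_ae
    filter_upwards [(f0_memLp β N).coeFn_toLp] with x hx
    rw [hx]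
  have hL : (∑' i : ℤ, ‖fourierCoeff (fL : AddCircle (1:ℝ) → ℂ) i‖^2)
      = ∑' j : ℤ, (Aj β N j)^2 := by
    apply tsum_congr
    intro j
    rw [hcoeff j, fourierCoeff_f0 β hβ0 hβ N j]
    rw [Complex.norm_real, Real.norm_eq_abs, _root_.sq_abs]
  have hR : (∫ t : AddCircle (1:ℝ), ‖fL t‖^2 ∂(@haarAddCircle 1 _))
      = ∫ t : AddCircle (1:ℝ), ‖f0 β N t‖^2 ∂(@haarAddCircle 1 _) := by
    apply integral_congr_ae
    filter_upwards [(f0_memLp β N).coeFn_toLp] with x hx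
    rw [hx]
  rw [hL, hR] at hP
  rw [hP]
  exact integral_f0_le β hβ0 hβ N

lemma inner_tsum_eq (β : ℝ) (N : ℕ) (j : ℤ) :
    (∑' k : ℤ, β * _root_.sinc (β * ((j : ℝ) - (k : ℝ))) * ((nn N) k : ℝ)) = Aj β N j := by
  rw [tsum_eq_sum (s := (Finset.range (N+1)).image (Nat.cast : ℕ → ℤ))
    (by
      intro b hb
      have hb' : nn N b = 0 := by
        apply nn_apply_ne N b
        intro k hk h
        exact hb (Finset.mem_image.mpr ⟨k, hk, h⟩)
      rw [hb']
      simp)]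
  rw [Finset.sum_image (by intro a _ b _ h; exact_mod_cast h)]
  unfold Aj
  apply Finset.sum_congr rfl
  intro k hk
  have heven : _root_.sinc (β * ((j : ℝ) - (((k:ℕ):ℤ) : ℝ))) = _root_.sinc (β * ((k : ℝ) - (j : ℝ))) := by
    rw [show β * ((j : ℝ) - (((k:ℕ):ℤ) : ℝ)) = -(β * ((k : ℝ) - (j : ℝ))) by push_cast; ring]
    rw [_root_.sinc_neg]
  rw [heven]
  ring

end Main5
/-- For `2/3 < α < 1`, the distance functional
`Δ_{αℤ,ℝ} = inf { ‖P_{1-α} n‖ : n nonzero finitely supported integer sequence }`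
vanishes, where `P_{1-α}` has matrix entries `(1-α) sinc((1-α)(j-k))`. -/
theorem stmt12 (α : ℝ) (h1 : 2/3 < α) (h2 : α < 1) :
    sInf {r : ℝ | ∃ n : ℤ →₀ ℤ, n ≠ 0 ∧
      r = Real.sqrt (∑' j : ℤ,
        (∑' k : ℤ, (1 - α) * _root_.sinc ((1 - α) * ((j : ℝ) - (k : ℝ))) * (n k : ℝ)) ^ 2)} = 0 := by
  set β := 1 - α with hβdef
  have hβ0 : 0 < β := by simp only [hβdef]; linarith
  have hβ : β < 1/3 := by simp only [hβdef]; linarith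
  set S := {r : ℝ | ∃ n : ℤ →₀ ℤ, n ≠ 0 ∧
      r = Real.sqrt (∑' j : ℤ,
        (∑' k : ℤ, β * _root_.sinc (β * ((j : ℝ) - (k : ℝ))) * (n k : ℝ)) ^ 2)} with hSdef
  have hmem : ∀ N : ℕ, Real.sqrt (∑' j : ℤ,
      (∑' k : ℤ, β * _root_.sinc (β * ((j : ℝ) - (k : ℝ))) * ((nn N) k : ℝ)) ^ 2) ∈ S :=
    fun N => ⟨nn N, nn_ne_zero N, rfl⟩
  have hnonneg : ∀ r ∈ S, 0 ≤ r := by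
    rintro r ⟨n, _, rfl⟩
    exact Real.sqrt_nonneg _
  have hbdd : BddBelow S := ⟨0, hnonneg⟩
  have hne : S.Nonempty := ⟨_, hmem 0⟩
  set q := 2 * Real.sin (π * β / 2) with hqdef
  have hπ := Real.pi_pos
  have hq0 : 0 ≤ q := by
    have : 0 ≤ Real.sin (π * β / 2) := by
      apply Real.sin_nonneg_of_nonneg_of_le_pi (by positivity)
      nlinarith
    simp only [hqdef]; linarith
  have hq1 : q < 1 := by
    have hlt : Real.sin (π * β / 2) < Real.sin (π / 6) := by
      apply Real.sin_lt_sin_of_lt_of_le_pi_div_two (by nlinarith) (by linarith)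
      nlinarith
    rw [Real.sin_pi_div_six] at hlt
    simp only [hqdef]; linarith
  have hbound : ∀ N : ℕ, Real.sqrt (∑' j : ℤ,
      (∑' k : ℤ, β * _root_.sinc (β * ((j : ℝ) - (k : ℝ))) * ((nn N) k : ℝ)) ^ 2) ≤ q ^ N := by
    intro N
    have he : (∑' j : ℤ,
        (∑' k : ℤ, β * _root_.sinc (β * ((j : ℝ) - (k : ℝ))) * ((nn N) k : ℝ)) ^ 2)
        = ∑' j : ℤ, (Aj β N j)^2 := by
      apply tsum_congr
      intro j
      rw [inner_tsum_eq β N j]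
    rw [he]
    calc Real.sqrt (∑' j : ℤ, (Aj β N j)^2)
        ≤ Real.sqrt (β * q^(2*N)) := Real.sqrt_le_sqrt (tsum_Aj_sq_le β hβ0 hβ N)
      _ = Real.sqrt β * Real.sqrt ((q^N)^2) := by
          rw [← Real.sqrt_mul (le_of_lt hβ0), ← pow_mul, mul_comm N 2]
      _ = Real.sqrt β * q^N := by rw [Real.sqrt_sq (by positivity)]
      _ ≤ 1 * q^N := by
          apply mul_le_mul_of_nonneg_right _ (by positivity)
          rw [show (1:ℝ) = Real.sqrt 1 by simp]
          exact Real.sqrt_le_sqrt (by linarith)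
      _ = q^N := one_mul _
  apply le_antisymm
  · by_contra hcon
    push_neg at hcon
    have hpos : 0 < sInf S := hcon
    obtain ⟨N, hN⟩ := exists_pow_lt_of_lt_one hpos hq1
    have h1' := csInf_le hbdd (hmem N)
    have h2' := hbound N
    linarith
  · exact le_csInf hne hnonneg
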